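/- Let f : ℝ³ → ℝ be differentiable and nowhere zero, and let a : ℝ³ → ℝ satisfy f(p)·(∂f/∂p_i)(p) = −a(p)·p_i for i = 1,2,3 and all p ∈ ℝ³. Define J_i(q,p) = (1/f(p))·ε_{ijk} q_j p_k, and fix ξ ∈ ℝ³. At each point x = (q,p) define the vector ρ(ξ)(x) ∈ ℝ⁶ with q-components (ρ_q)_j = ε_{ijk} ξ_i q_k and p-components (ρ_p)_j = ε_{ijk} ξ_i p_k, and the 6×6 matrix Ω(x) = [[0, −(1/f(p))·I₃],[(1/f(p))·I₃, (1/f(p)²)·L(x)]] in 3×3 blocks, where L(x)_{ij} = a(p)·ε_{ijk}·J_k(x). Then for every x and every w ∈ ℝ⁶, the Fréchet derivative of the function ξ·J = Σ_i ξ_i J_i satisfies D(ξ·J)(x)(w) = ρ(ξ)(x)ᵀ · Ω(x) · w. That is, the diagonal SO(3)-action is Hamiltonian with momentum map μ(q,p) = Σ_i J_i(q,p) 𝔱^i. -/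

import Mathlib

open Matrix

/-- Deformed angular momentum vector `J_i(q,p) = (1/f(p))·ε_{ijk} q_j p_k` on the phase space
`ℝ⁶` with coordinates `(q₁,q₂,q₃,p₁,p₂,p₃)`. -/
noncomputable def J3fun (f : (Fin 3 → ℝ) → ℝ) (x : Fin 6 → ℝ) : Fin 3 → ℝ :=
  (f ![x 3, x 4, x 5])⁻¹ • crossProduct ![x 0, x 1, x 2] ![x 3, x 4, x 5]

/-- Matrix of the deformed symplectic form of the three-dimensional rotationally invariant
(Maggiore-type) GUP theory: block form `[[0, −(1/f)·I₃],[(1/f)·I₃, (1/f²)·L]]` with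
`L_{ij} = a(p)·ε_{ijk}·J_k`. -/
noncomputable def Omega3 (f a : (Fin 3 → ℝ) → ℝ) (x : Fin 6 → ℝ) : Matrix (Fin 6) (Fin 6) ℝ :=
  let p : Fin 3 → ℝ := ![x 3, x 4, x 5]
  let J : Fin 3 → ℝ := J3fun f x
  let g : ℝ := (f p)⁻¹
  let b : ℝ := a p / (f p) ^ 2
  !![0, 0, 0, -g, 0, 0;
     0, 0, 0, 0, -g, 0;
     0, 0, 0, 0, 0, -g;
     g, 0, 0, 0, b * J 2, -(b * J 1);
     0, g, 0, -(b * J 2), 0, b * J 0;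
     0, 0, g, b * J 1, -(b * J 0), 0]

/-- Vector field `ρ(ξ)` on the phase space `ℝ⁶` generated by the Lie algebra element
`ξ^i T_i ∈ 𝔰𝔬(3)`: `(ρ_q)_j = ε_{ijk} ξ_i q_k`, `(ρ_p)_j = ε_{ijk} ξ_i p_k`. -/
def rho3 (ξ : Fin 3 → ℝ) (x : Fin 6 → ℝ) : Fin 6 → ℝ :=
  ![x 1 * ξ 2 - x 2 * ξ 1, x 2 * ξ 0 - x 0 * ξ 2, x 0 * ξ 1 - x 1 * ξ 0,
    x 4 * ξ 2 - x 5 * ξ 1, x 5 * ξ 0 - x 3 * ξ 2, x 3 * ξ 1 - x 4 * ξ 0]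


private lemma vec6_0 {α : Type*} (a b c d e f : α) : ![a,b,c,d,e,f] 0 = a := rfl
private lemma vec6_1 {α : Type*} (a b c d e f : α) : ![a,b,c,d,e,f] 1 = b := rfl
private lemma vec6_2 {α : Type*} (a b c d e f : α) : ![a,b,c,d,e,f] 2 = c := rfl
private lemma vec6_3 {α : Type*} (a b c d e f : α) : ![a,b,c,d,e,f] 3 = d := rfl
private lemma vec6_4 {α : Type*} (a b c d e f : α) : ![a,b,c,d,e,f] 4 = e := rfl
private lemma vec6_5 {α : Type*} (a b c d e f : α) : ![a,b,c,d,e,f] 5 = f := rfl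
private lemma vec3_0 {α : Type*} (a b c : α) : ![a,b,c] 0 = a := rfl
private lemma vec3_1 {α : Type*} (a b c : α) : ![a,b,c] 1 = b := rfl
private lemma vec3_2 {α : Type*} (a b c : α) : ![a,b,c] 2 = c := rfl

set_option maxHeartbeats 2000000 in
/-- If `f` is differentiable and nowhere zero and `f·∂f/∂p_i = −a·p_i` (closure condition),
then for every `ξ ∈ 𝔰𝔬(3)` the Fréchet derivative of `ξ·J` satisfies
`D(ξ·J)(x)(w) = ρ(ξ)(x)ᵀ·Ω(x)·w`: the diagonal `SO(3)`-action is Hamiltonian with momentum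
map `μ(q,p) = Σ_i J_i(q,p) 𝔱^i`. -/
theorem stmt_13 (f : (Fin 3 → ℝ) → ℝ) (hf : Differentiable ℝ f)
    (hf0 : ∀ p, f p ≠ 0) (a : (Fin 3 → ℝ) → ℝ)
    (hfa : ∀ (p : Fin 3 → ℝ) (i : Fin 3),
      f p * fderiv ℝ f p (Pi.single i 1) = -(a p * p i))
    (ξ : Fin 3 → ℝ) :
    ∀ x w : Fin 6 → ℝ,
      fderiv ℝ (fun y : Fin 6 → ℝ => ∑ i : Fin 3, ξ i * J3fun f y i) x w =
        rho3 ξ x ⬝ᵥ (Omega3 f a x).mulVec w := by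
  intro x w
  have hproj : ∀ i : Fin 6, HasFDerivAt (fun y : Fin 6 → ℝ => y i)
      (ContinuousLinearMap.proj (R := ℝ) i) x := fun i => hasFDerivAt_apply i x
  set p : Fin 3 → ℝ := ![x 3, x 4, x 5] with hp
  let Pmap : (Fin 6 → ℝ) →L[ℝ] (Fin 3 → ℝ) :=
    ContinuousLinearMap.pi ![ContinuousLinearMap.proj 3, ContinuousLinearMap.proj 4,
      ContinuousLinearMap.proj 5]
  have hPapp : ∀ y : Fin 6 → ℝ, Pmap y = ![y 3, y 4, y 5] := by
    intro y; funext i; fin_cases i <;> rfl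
  have hPd : HasFDerivAt (fun y : Fin 6 → ℝ => f ![y 3, y 4, y 5])
      ((fderiv ℝ f p).comp Pmap) x := by
    have h := ((hf (Pmap x)).hasFDerivAt).comp x Pmap.hasFDerivAt
    rw [hPapp x] at h
    have h2 : (f ∘ Pmap) = fun y : Fin 6 → ℝ => f ![y 3, y 4, y 5] := by
      funext y; simp [Function.comp, hPapp]
    rwa [h2] at h
  have hg : HasFDerivAt (fun y : Fin 6 → ℝ => (f ![y 3, y 4, y 5])⁻¹)
      ((-(ContinuousLinearMap.mulLeftRight ℝ ℝ (f p)⁻¹ (f p)⁻¹)).comp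
        ((fderiv ℝ f p).comp Pmap)) x :=
    (hasFDerivAt_inv' (𝕜 := ℝ) (hf0 p)).comp x hPd
  have hC := ((((hproj 1).mul (hproj 5)).sub ((hproj 2).mul (hproj 4))).const_mul (ξ 0)).add
    (((((hproj 2).mul (hproj 3)).sub ((hproj 0).mul (hproj 5))).const_mul (ξ 1)).add
      ((((hproj 0).mul (hproj 4)).sub ((hproj 1).mul (hproj 3))).const_mul (ξ 2)))
  have hfun : (fun y : Fin 6 → ℝ => ∑ i : Fin 3, ξ i * J3fun f y i) =
      fun y : Fin 6 → ℝ => (f ![y 3, y 4, y 5])⁻¹ *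
        (ξ 0 * (y 1 * y 5 - y 2 * y 4) +
          (ξ 1 * (y 2 * y 3 - y 0 * y 5) + ξ 2 * (y 0 * y 4 - y 1 * y 3))) := by
    funext y
    simp only [J3fun, cross_apply, Fin.sum_univ_three, Pi.smul_apply, smul_eq_mul,
      Matrix.cons_val_zero, Matrix.cons_val_one, Matrix.head_cons, Matrix.cons_val_two,
      Matrix.tail_cons]
    ring
  have hF := hg.mul hC
  rw [hfun, (show HasFDerivAt (fun y : Fin 6 → ℝ => (f ![y 3, y 4, y 5])⁻¹ *
      (ξ 0 * (y 1 * y 5 - y 2 * y 4) +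
        (ξ 1 * (y 2 * y 3 - y 0 * y 5) + ξ 2 * (y 0 * y 4 - y 1 * y 3)))) _ x from hF).fderiv]
  have hDf : ∀ i : Fin 3, fderiv ℝ f p (Pi.single i 1) = -(a p * p i) / f p := by
    intro i
    rw [eq_div_iff (hf0 p)]
    linarith [hfa p i]
  have hv : (![w 3, w 4, w 5] : Fin 3 → ℝ) =
      w 3 • (Pi.single 0 1 : Fin 3 → ℝ) + w 4 • (Pi.single 1 1 : Fin 3 → ℝ)
        + w 5 • (Pi.single 2 1 : Fin 3 → ℝ) := by
    funext j; fin_cases j <;> simp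
  have hDfv : fderiv ℝ f p ![w 3, w 4, w 5] =
      w 3 * (-(a p * p 0) / f p) + w 4 * (-(a p * p 1) / f p) + w 5 * (-(a p * p 2) / f p) := by
    rw [hv]
    simp only [map_add, _root_.map_smul, hDf, smul_eq_mul]
  simp only [ContinuousLinearMap.add_apply, ContinuousLinearMap.smul_apply,
    ContinuousLinearMap.coe_comp', Function.comp_apply, ContinuousLinearMap.sub_apply,
    ContinuousLinearMap.proj_apply, ContinuousLinearMap.coe_smul', Pi.smul_apply,
    ContinuousLinearMap.neg_apply, ContinuousLinearMap.mulLeftRight_apply,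
    smul_eq_mul, hPapp, hDfv, Pi.add_apply, Pi.sub_apply, Pi.mul_apply]
  have hp0 : p 0 = x 3 := rfl
  have hp1 : p 1 = x 4 := rfl
  have hp2 : p 2 = x 5 := rfl
  simp only [rho3, Omega3, J3fun, cross_apply, Matrix.mulVec, dotProduct,
    Fin.sum_univ_six, Matrix.of_apply, vec6_0, vec6_1, vec6_2, vec6_3, vec6_4, vec6_5,
    vec3_0, vec3_1, vec3_2, Pi.smul_apply, smul_eq_mul, ← hp, hp0, hp1, hp2]
  have hfp := hf0 p
  field_simp
  ring
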